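/- lim_{r→∞} ( sup { limsup_{m→∞} (Σ_{n=1}^m log(n)·a_n) / (Σ_{n=1}^m n·a_n) : (a_n) ∈ 𝔸_r } ) = 0; that is, for every ε > 0 there exists r₀ ≥ 1 such that for every r ≥ r₀ and every sequence (a_n) ∈ 𝔸_r one has limsup_{m→∞} (Σ_{n=1}^m log(n)·a_n) / (Σ_{n=1}^m n·a_n) ≤ ε. -/

import Mathlib

open Filter

/-- `(a_n)_{n≥1} ∈ 𝔸_r`: nonnegative terms, `∑_{n≥1} a_n ≤ 1` and
`r ≤ ∑_{n≥1} n · a_n` (the latter series, taken in `ℝ≥0∞`, may be infinite). -/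
def memA (r : ℝ) (a : ℕ → ℝ) : Prop :=
  (∀ n : ℕ, 1 ≤ n → 0 ≤ a n) ∧
  (∀ m : ℕ, ∑ n ∈ Finset.Icc 1 m, a n ≤ 1) ∧
  ENNReal.ofReal r ≤ ∑' n : ℕ, ENNReal.ofReal ((n : ℝ) * a n)

lemma log_le_lin (ε : ℝ) (hε : 0 < ε) (n : ℕ) :
    Real.log n ≤ (ε / 2) * n + 2 / ε := by
  rcases Nat.eq_zero_or_pos n with h | h
  · simp [h]; positivity
  have hn : (0:ℝ) < n := by exact_mod_cast h
  have hs : Real.sqrt n ^ 2 = n := Real.sq_sqrt hn.le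
  have hs0 : 0 ≤ Real.sqrt n := Real.sqrt_nonneg _
  have h1 : Real.log n = 2 * Real.log (Real.sqrt n) := (Real.log_sqrt hn.le).symm ▸ by ring
  have hsp : 0 < Real.sqrt n := Real.sqrt_pos.mpr hn
  have h2 : Real.log (Real.sqrt n) ≤ Real.sqrt n - 1 := Real.log_le_sub_one_of_pos hsp
  have h5 : ε * (2 / ε) = 2 := by field_simp
  have h6 : Real.log n ≤ 2 * Real.sqrt n - 2 := by rw [h1]; linarith
  have hne : ε ≠ 0 := ne_of_gt hε
  have key : ε / 2 * n + 2 / ε - 2 * Real.sqrt n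
      = (ε * Real.sqrt n - 2) ^ 2 / (2 * ε) := by
    rw [eq_div_iff (by positivity)]
    field_simp
    linear_combination (-(ε^2)) * hs
  have h7 : 0 ≤ ε / 2 * n + 2 / ε - 2 * Real.sqrt n := by
    rw [key]; positivity
  linarith

theorem stmt1 (ε : ℝ) (hε : 0 < ε) :
    ∃ r₀ : ℝ, 1 ≤ r₀ ∧ ∀ r : ℝ, r₀ ≤ r → ∀ a : ℕ → ℝ, memA r a →
      Filter.limsup (fun m : ℕ =>
          (∑ n ∈ Finset.Icc 1 m, Real.log n * a n) /
            (∑ n ∈ Finset.Icc 1 m, (n : ℝ) * a n))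
        Filter.atTop ≤ ε := by
  have h40 : (0:ℝ) ≤ 4 / ε ^ 2 := by positivity
  refine ⟨2 + 4 / ε ^ 2, by linarith, ?_⟩
  intro r hr a ha
  obtain ⟨ha0, hsum1, htsum⟩ := ha
  have hε2 : (0:ℝ) < 4 / ε ^ 2 := by positivity
  have hr2 : (2:ℝ) + 4 / ε ^ 2 ≤ r := hr
  have hrpos : (0:ℝ) < r := by linarith
  -- eventual lower bound on the denominator
  have htend := (ENNReal.tendsto_nat_tsum (fun n => ENNReal.ofReal ((n : ℝ) * a n))).comp
    (tendsto_add_atTop_nat 1)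
  have hlt : ENNReal.ofReal (r - 1) < ∑' n : ℕ, ENNReal.ofReal ((n : ℝ) * a n) := by
    refine lt_of_lt_of_le ?_ htsum
    exact (ENNReal.ofReal_lt_ofReal_iff hrpos).mpr (by linarith)
  have hev := htend.eventually_const_lt hlt
  have key : ∀ᶠ m : ℕ in atTop,
      (∑ n ∈ Finset.Icc 1 m, Real.log n * a n) /
        (∑ n ∈ Finset.Icc 1 m, (n : ℝ) * a n) ≤ ε := by
    filter_upwards [hev] with m hm
    have hnonneg : ∀ n ∈ Finset.range (m + 1), 0 ≤ (n : ℝ) * a n := by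
      intro n _
      rcases Nat.eq_zero_or_pos n with h | h
      · simp [h]
      · exact mul_nonneg (Nat.cast_nonneg n) (ha0 n h)
    have heq : (∑ n ∈ Finset.range (m + 1), (n : ℝ) * a n)
        = ∑ n ∈ Finset.Icc 1 m, (n : ℝ) * a n := by
      refine (Finset.sum_subset ?_ ?_).symm
      · intro n hn; simp at hn ⊢; omega
      · intro n hn hn'
        simp only [Finset.mem_Icc, Finset.mem_range] at hn hn'
        have : n = 0 := by omega
        simp [this]
    rw [Function.comp_apply, ← ENNReal.ofReal_sum_of_nonneg hnonneg,
      ENNReal.ofReal_lt_ofReal_iff_of_nonneg (by linarith), heq] at hm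
    set S := ∑ n ∈ Finset.Icc 1 m, (n : ℝ) * a n with hS
    have hSpos : 0 < S := by nlinarith
    have hnum : (∑ n ∈ Finset.Icc 1 m, Real.log n * a n)
        ≤ (ε / 2) * S + 2 / ε := by
      have h1 : (∑ n ∈ Finset.Icc 1 m, Real.log n * a n)
          ≤ ∑ n ∈ Finset.Icc 1 m, ((ε / 2) * n + 2 / ε) * a n := by
        refine Finset.sum_le_sum fun n hn => ?_
        have hn1 : 1 ≤ n := (Finset.mem_Icc.mp hn).1
        exact mul_le_mul_of_nonneg_right (log_le_lin ε hε n) (ha0 n hn1)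
      have h2 : ∑ n ∈ Finset.Icc 1 m, ((ε / 2) * n + 2 / ε) * a n
          = (ε / 2) * S + (2 / ε) * ∑ n ∈ Finset.Icc 1 m, a n := by
        rw [hS, Finset.mul_sum, Finset.mul_sum, ← Finset.sum_add_distrib]
        exact Finset.sum_congr rfl fun n _ => by ring
      have h3 : (2 / ε) * ∑ n ∈ Finset.Icc 1 m, a n ≤ 2 / ε := by
        have := hsum1 m
        nlinarith [div_pos (by norm_num : (0:ℝ) < 2) hε]
      linarith
    rw [div_le_iff₀ hSpos]
    have h4 : 2 / ε ≤ (ε / 2) * S := by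
      have : (ε / 2) * (4 / ε ^ 2) = 2 / ε := by field_simp; ring
      nlinarith
    linarith
  refine Filter.limsup_le_of_le ?_ key
  refine isCoboundedUnder_le_of_le atTop (x := (0:ℝ)) fun m => div_nonneg
    (Finset.sum_nonneg fun n hn =>
      mul_nonneg (Real.log_natCast_nonneg n) (ha0 n (Finset.mem_Icc.mp hn).1))
    (Finset.sum_nonneg fun n hn =>
      mul_nonneg (Nat.cast_nonneg n) (ha0 n (Finset.mem_Icc.mp hn).1))
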